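/- For every positive integer n, the forcing number of the 2n × 2n square region (the region whose unit squares have lower-left corners (a,b) with 0 ≤ a ≤ 2n−1 and 0 ≤ b ≤ 2n−1) is equal to n. -/

import Mathlib

/-- The closed unit square with lower-left corner `s`, as a subset of `ℝ × ℝ`. -/
def unitSq (s : ℤ × ℤ) : Set (ℝ × ℝ) :=
  Set.Icc (s.1 : ℝ) (s.1 + 1) ×ˢ Set.Icc (s.2 : ℝ) (s.2 + 1)

/-- The union of the closed unit squares of a region `R`. -/
def regionSpace (R : Finset (ℤ × ℤ)) : Set (ℝ × ℝ) := ⋃ s ∈ R, unitSq s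

/-- The embedding of a lattice point into the plane. -/
def embPt (x : ℤ × ℤ) : ℝ × ℝ := ((x.1 : ℝ), (x.2 : ℝ))

/-- The four corners of the unit square with lower-left corner `s`. -/
def sqCorners (s : ℤ × ℤ) : Set (ℤ × ℤ) :=
  {s, (s.1 + 1, s.2), (s.1, s.2 + 1), (s.1 + 1, s.2 + 1)}

/-- `V R` : the lattice points that are corners of squares of `R`. -/
def V (R : Finset (ℤ × ℤ)) : Set (ℤ × ℤ) := {x | ∃ s ∈ R, x ∈ sqCorners s}

/-- `bdry R` : lattice points lying on the topological boundary of the region. -/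
def bdry (R : Finset (ℤ × ℤ)) : Set (ℤ × ℤ) := {x | embPt x ∈ frontier (regionSpace R)}

/-- The square with lower-left corner `s` is white when `s.1 + s.2` is even. -/
def White (s : ℤ × ℤ) : Prop := Even (s.1 + s.2)

/-- A domino: a pair of unit squares sharing a side. -/
def IsDomino (d : Finset (ℤ × ℤ)) : Prop :=
  ∃ s t : ℤ × ℤ, d = {s, t} ∧ (t - s = (1, 0) ∨ t - s = (0, 1))

/-- A domino tiling of `R` : a partition of the squares of `R` into dominoes. -/
def IsDominoTiling (R : Finset (ℤ × ℤ)) (T : Finset (Finset (ℤ × ℤ))) : Prop :=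
  (∀ d ∈ T, IsDomino d ∧ ∀ s ∈ d, s ∈ R) ∧ ∀ s ∈ R, ∃! d, d ∈ T ∧ s ∈ d

/-- The four unit steps in the square lattice. -/
def unitSteps : Set (ℤ × ℤ) := {(1, 0), (-1, 0), (0, 1), (0, -1)}

/-- A directed lattice edge of `R`. -/
def DirectedEdge (R : Finset (ℤ × ℤ)) (x y : ℤ × ℤ) : Prop :=
  x ∈ V R ∧ y ∈ V R ∧ y - x ∈ unitSteps ∧
    segment ℝ (embPt x) (embPt y) ⊆ regionSpace R

/-- A directed lattice edge of `R` lying on the boundary `∂R`. -/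
def BoundaryEdge (R : Finset (ℤ × ℤ)) (x y : ℤ × ℤ) : Prop :=
  DirectedEdge R x y ∧ segment ℝ (embPt x) (embPt y) ⊆ frontier (regionSpace R)

/-- The union of the closed squares of a domino. -/
def dominoSpace (d : Finset (ℤ × ℤ)) : Set (ℝ × ℝ) := ⋃ s ∈ d, unitSq s

/-- The edge `(x, y)` belongs to the tiling `T` : its segment is not contained in the
interior of a domino of `T`. -/
def EdgeInTiling (R : Finset (ℤ × ℤ)) (T : Finset (Finset (ℤ × ℤ))) (x y : ℤ × ℤ) : Prop :=
  DirectedEdge R x y ∧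
    ¬ ∃ d ∈ T, segment ℝ (embPt x) (embPt y) ⊆ interior (dominoSpace d)

/-- The unit square adjacent to the directed edge `(x, y)` on its left. -/
def leftSq (x y : ℤ × ℤ) : ℤ × ℤ :=
  if y = (x.1 + 1, x.2) then (x.1, x.2)
  else if y = (x.1 - 1, x.2) then (x.1 - 1, x.2 - 1)
  else if y = (x.1, x.2 + 1) then (x.1 - 1, x.2)
  else (x.1, x.2 - 1)

/-- `h` is a height function of the tiling `T` of `R`. -/
def IsHeightFunction (R : Finset (ℤ × ℤ)) (T : Finset (Finset (ℤ × ℤ)))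
    (h : ℤ × ℤ → ℤ) : Prop :=
  ∀ x y : ℤ × ℤ, EdgeInTiling R T x y → White (leftSq x y) → h x - h y = 1

/-- `S` is a forcing set of the tiling `T` of `R`. -/
def IsForcingSet (R : Finset (ℤ × ℤ)) (T S : Finset (Finset (ℤ × ℤ))) : Prop :=
  S ⊆ T ∧ ∀ T', IsDominoTiling R T' → S ⊆ T' → T' = T

/-- The forcing number of `R`. -/
noncomputable def forcingNumber (R : Finset (ℤ × ℤ)) : ℕ :=
  sInf {n | ∃ T S, IsDominoTiling R T ∧ IsForcingSet R T S ∧ S.card = n}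

/-- The function `α`. -/
def alpha (x y : ℤ × ℤ) : ℤ :=
  if (Even (x.1 - x.2) ∧ y.2 - x.2 ≤ y.1 - x.1) ∨ (¬ Even (x.1 - x.2) ∧ y.1 - x.1 < y.2 - x.2)
  then 2 * max |y.1 - x.1| |y.2 - x.2| + ((y.1 - x.1) - (y.2 - x.2)) % 2
  else 2 * max |y.1 - x.1| |y.2 - x.2| - ((y.1 - x.1) - (y.2 - x.2)) % 2

/-- The Chebyshev norm on `ℤ × ℤ`. -/
def cheb (v : ℤ × ℤ) : ℤ := max |v.1| |v.2|

/-- A geodesic path in the square lattice. -/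
def IsGeodesicPath (n : ℕ) (f : Fin (n + 1) → ℤ × ℤ) : Prop :=
  ∀ i : Fin n, f i.castSucc ≠ f i.succ ∧
    (∃ s : ℤ × ℤ, f i.castSucc ∈ sqCorners s ∧ f i.succ ∈ sqCorners s) ∧
    cheb (f i.succ - f 0) = cheb (f i.castSucc - f 0) + 1

/-- `x ∼_R y` : some geodesic path from `x` to `y` has all of its points in `V R`. -/
def geoRel (R : Finset (ℤ × ℤ)) (x y : ℤ × ℤ) : Prop :=
  ∃ (n : ℕ) (f : Fin (n + 1) → ℤ × ℤ), IsGeodesicPath n f ∧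
    f 0 = x ∧ f (Fin.last n) = y ∧ ∀ i, f i ∈ V R

/-- The black squares of `R`. -/
def blackSquares (R : Finset (ℤ × ℤ)) : Finset (ℤ × ℤ) :=
  R.filter fun s => ¬ Even (s.1 + s.2)

/-- The set of white squares of `R` adjacent to at least one square of `U`. -/
noncomputable def nbhdSq (R U : Finset (ℤ × ℤ)) : Finset (ℤ × ℤ) :=
  @Finset.filter _ (fun w => Even (w.1 + w.2) ∧ ∃ b ∈ U, w - b ∈ unitSteps)
    (Classical.decPred _) R

/-- The excess `e(U) = |N(U)| - |U|`. -/
noncomputable def excess (R U : Finset (ℤ × ℤ)) : ℤ :=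
  ((nbhdSq R U).card : ℤ) - U.card

/-- The maximum excess of an ordering (given as a list) of the black squares. -/
noncomputable def maxExcess (R : Finset (ℤ × ℤ)) (l : List (ℤ × ℤ)) : ℤ :=
  sSup {z : ℤ | ∃ k, 1 ≤ k ∧ k ≤ l.length ∧ z = excess R (l.take k).toFinset}

/-- The minimum maximum excess of `R` over all orderings of its black squares. -/
noncomputable def minMaxExcess (R : Finset (ℤ × ℤ)) : ℤ :=
  sInf {z : ℤ | ∃ l : List (ℤ × ℤ), l.Nodup ∧ l.toFinset = blackSquares R ∧
    z = maxExcess R l}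

/-- The `2n × 2n` square region. -/
noncomputable def squareRegion (n : ℕ) : Finset (ℤ × ℤ) :=
  Finset.Icc ((0 : ℤ), (0 : ℤ)) ((2 * n - 1 : ℤ), (2 * n - 1 : ℤ))

/-- The square of side `2k` centered at `x` (as a set of unit squares). -/
noncomputable def centerSquare (x : ℤ × ℤ) (k : ℕ) : Finset (ℤ × ℤ) :=
  Finset.Icc ((x.1 - k, x.2 - k) : ℤ × ℤ) ((x.1 + k - 1, x.2 + k - 1) : ℤ × ℤ)

/-- Possible values at `x` of height functions of tilings of `R` normalized at `v₀`. -/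
def heightVals (R : Finset (ℤ × ℤ)) (v₀ x : ℤ × ℤ) : Set ℤ :=
  {m | ∃ T h, IsDominoTiling R T ∧ IsHeightFunction R T h ∧ h v₀ = 0 ∧ h x = m}

/-- `c(x)` : the side of the largest square centered at `x` whose removal keeps `R` tileable. -/
noncomputable def maxSquareSide (R : Finset (ℤ × ℤ)) (x : ℤ × ℤ) : ℕ :=
  sSup {m : ℕ | ∃ k : ℕ, m = 2 * k ∧ centerSquare x k ⊆ R ∧
    ∃ T, IsDominoTiling (R \ centerSquare x k) T}

namespace PKaux
variable {R : Finset (ℤ × ℤ)} {T : Finset (Finset (ℤ × ℤ))}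

noncomputable def dom (T : Finset (Finset (ℤ × ℤ))) (s : ℤ × ℤ) : Finset (ℤ × ℤ) :=
  if h : ∃ d ∈ T, s ∈ d then h.choose else ∅

lemma dom_spec (hT : IsDominoTiling R T) {s : ℤ × ℤ} (hs : s ∈ R) :
    dom T s ∈ T ∧ s ∈ dom T s := by
  obtain ⟨d, ⟨hd, hsd⟩, -⟩ := hT.2 s hs
  have h : ∃ d ∈ T, s ∈ d := ⟨d, hd, hsd⟩
  rw [dom, dif_pos h]
  exact h.choose_spec

lemma dom_eq (hT : IsDominoTiling R T) {s : ℤ × ℤ} (hs : s ∈ R)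
    {d : Finset (ℤ × ℤ)} (hd : d ∈ T) (hsd : s ∈ d) : d = dom T s := by
  obtain ⟨d', hd', hu⟩ := hT.2 s hs
  have h1 := hu d ⟨hd, hsd⟩
  have h2 := hu _ (dom_spec hT hs)
  rw [h1, h2]

/-- the partner square of `s` in its domino. -/
noncomputable def opp (T : Finset (Finset (ℤ × ℤ))) (s : ℤ × ℤ) : ℤ × ℤ :=
  (dom T s).sum id - s

lemma dom_struct (hT : IsDominoTiling R T) {s : ℤ × ℤ} (hs : s ∈ R) :
    dom T s = {s, opp T s} ∧ opp T s ≠ s ∧ opp T s ∈ R ∧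
      (opp T s - s = (1,0) ∨ opp T s - s = (0,1) ∨ opp T s - s = (-1,0) ∨ opp T s - s = (0,-1)) := by
  obtain ⟨hdT, hsd⟩ := dom_spec hT hs
  obtain ⟨⟨a, b, hab, hstep⟩, hsub⟩ := hT.1 _ hdT
  have hne : a ≠ b := by
    intro h
    rw [h] at hstep
    rcases hstep with h' | h' <;> rw [Prod.ext_iff] at h' <;> simp at h' <;> omega
  have hsum : (dom T s).sum id = a + b := by
    rw [hab, Finset.sum_pair hne]; rfl
  have hs' : s = a ∨ s = b := by
    have h := hsd; rw [hab] at h; simpa using h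
  have key : ∀ c c' : ℤ × ℤ, s = c → ({c, c'} : Finset (ℤ × ℤ)) = {a, b} →
      c' ∈ ({a, b} : Finset (ℤ × ℤ)) → opp T s = c' → c ≠ c' →
      dom T s = {s, opp T s} ∧ opp T s ≠ s ∧ opp T s ∈ R := by
    intro c c' hc hset hmem hopp hnecc
    refine ⟨?_, ?_, ?_⟩
    · rw [hab, hopp, hc]; exact hset.symm
    · rw [hopp, hc]; exact fun h => hnecc h.symm
    · rw [hopp]
      exact hsub c' (by rw [hab]; exact hmem)
  rcases hs' with hsa | hsb
  · have hopp : opp T s = b := by rw [opp, hsum, hsa]; ring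
    have hmain := key a b hsa rfl (by simp) hopp hne
    refine ⟨hmain.1, hmain.2.1, hmain.2.2, ?_⟩
    rw [hopp, hsa]
    rcases hstep with h' | h'
    · exact Or.inl h'
    · exact Or.inr (Or.inl h')
  · have hopp : opp T s = a := by rw [opp, hsum, hsb]; ring
    have hmain := key b a hsb (Finset.pair_comm b a) (by simp) hopp (Ne.symm hne)
    refine ⟨hmain.1, hmain.2.1, hmain.2.2, ?_⟩
    rw [hopp, hsb]
    have hrev : a - b = -(b - a) := by ring
    rcases hstep with h' | h'
    · refine Or.inr (Or.inr (Or.inl ?_))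
      rw [hrev, h']; rfl
    · refine Or.inr (Or.inr (Or.inr ?_))
      rw [hrev, h']; rfl

lemma dom_pair (hT : IsDominoTiling R T) {s : ℤ × ℤ} (hs : s ∈ R) :
    dom T s = {s, opp T s} := (dom_struct hT hs).1

lemma opp_ne (hT : IsDominoTiling R T) {s : ℤ × ℤ} (hs : s ∈ R) : opp T s ≠ s :=
  (dom_struct hT hs).2.1

lemma opp_mem (hT : IsDominoTiling R T) {s : ℤ × ℤ} (hs : s ∈ R) : opp T s ∈ R :=
  (dom_struct hT hs).2.2.1

lemma opp_opp (hT : IsDominoTiling R T) {s : ℤ × ℤ} (hs : s ∈ R) :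
    opp T (opp T s) = s := by
  have h1 := dom_pair hT hs
  have h2 : dom T (opp T s) = dom T s := by
    refine (dom_eq hT (opp_mem hT hs) (dom_spec hT hs).1 ?_).symm
    rw [h1]; simp
  rw [opp, h2, opp, h1, Finset.sum_pair (Ne.symm (opp_ne hT hs))]
  simp

lemma dom_of_mem (hT : IsDominoTiling R T) {s : ℤ × ℤ} (hs : s ∈ R)
    {t : ℤ × ℤ} (ht : t ∈ dom T s) : t = s ∨ t = opp T s := by
  rw [dom_pair hT hs] at ht; simpa using ht

/-- two nested tilings are equal -/
lemma tiling_subset_eq {T1 T2 : Finset (Finset (ℤ × ℤ))}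
    (h1 : IsDominoTiling R T1) (h2 : IsDominoTiling R T2) (hsub : T1 ⊆ T2) : T2 = T1 := by
  ext d
  refine ⟨fun hd => ?_, fun hd => hsub hd⟩
  obtain ⟨⟨a, b, hab, -⟩, hins⟩ := h2.1 d hd
  have ha : a ∈ d := by rw [hab]; simp
  have haR : a ∈ R := hins a ha
  obtain ⟨d', hd', hu⟩ := h2.2 a haR
  have e1 : d = d' := (hu d ⟨hd, ha⟩)
  have e2 : dom T1 a = d' := hu _ ⟨hsub (dom_spec h1 haR).1, (dom_spec h1 haR).2⟩
  rw [e1, ← e2]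
  exact (dom_spec h1 haR).1


def inR (n : ℕ) (x y : ℤ) : Prop := 0 ≤ x ∧ x < 2*n ∧ 0 ≤ y ∧ y < 2*n

def prf (n : ℕ) (x y : ℤ) : ℤ × ℤ :=
  if x < y ∧ x + y < 2*n - 1 then (if (y - x) % 2 = 1 then (x, y+1) else (x, y-1))
  else if y < x ∧ 2*(n:ℤ) ≤ x + y then (if (x + y) % 2 = 0 then (x, y+1) else (x, y-1))
  else if 2*(n:ℤ) ≤ 2*y then (if (x+y) % 2 = 1 then (x+1, y) else (x-1, y))
  else (if (x+y) % 2 = 0 then (x+1, y) else (x-1, y))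

def rkf (n : ℕ) (x y : ℤ) : ℤ :=
  if x < y ∧ x + y < 2*n - 1 then (if (y - x) % 2 = 1 then 2*n-2-y else 2*n-1-y)
  else if y < x ∧ 2*(n:ℤ) ≤ x + y then (if (x+y) % 2 = 0 then 4*n-4-y else 4*n-3-y)
  else if 2*(n:ℤ) ≤ 2*y then
    (if (x+y) % 2 = 1 then (if x+y = 2*n-1 then 0 else x-1)
     else (if x+y = 2*n then 0 else x-2))
  else (if (x+y) % 2 = 0 then 2*n-1+x else 2*n-2+x)

def pivf (n : ℕ) (x y : ℤ) : Prop :=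
  if x < y ∧ x + y < 2*n - 1 then (y - x) % 2 = 0
  else if y < x ∧ 2*(n:ℤ) ≤ x + y then (x+y) % 2 = 1
  else if 2*(n:ℤ) ≤ 2*y then (x+y) % 2 = 1
  else (x+y) % 2 = 0

lemma prf_mem {n : ℕ} {x y u v : ℤ} (hn : 0 < n) (h : inR n x y)
    (huv : prf n x y = (u, v)) : inR n u v := by
  obtain ⟨h1, h2, h3, h4⟩ := h
  have hn' : (1:ℤ) ≤ n := by exact_mod_cast hn
  unfold prf at huv
  unfold inR
  split_ifs at huv <;> simp [Prod.ext_iff] at huv <;> omega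

lemma prf_adj {n : ℕ} {x y u v : ℤ} (huv : prf n x y = (u, v)) :
    ((u,v) = (x+1, y) ∨ (u,v) = (x-1, y) ∨ (u,v) = (x, y+1) ∨ (u,v) = (x, y-1)) := by
  unfold prf at huv
  split_ifs at huv <;> simp [Prod.ext_iff] at huv ⊢ <;> omega

lemma prf_invol {n : ℕ} {x y u v : ℤ} (hn : 0 < n) (h : inR n x y)
    (huv : prf n x y = (u, v)) : prf n u v = (x, y) := by
  obtain ⟨h1, h2, h3, h4⟩ := h
  have hn' : (1:ℤ) ≤ n := by exact_mod_cast hn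
  unfold prf at huv ⊢
  split_ifs at huv <;> simp [Prod.ext_iff] at huv <;>
    obtain ⟨hu, hv⟩ := huv <;> subst hu <;> subst hv <;>
    split_ifs <;> simp [Prod.ext_iff] <;> omega

lemma rkf_prf {n : ℕ} {x y u v : ℤ} (hn : 0 < n) (h : inR n x y)
    (huv : prf n x y = (u, v)) : rkf n u v = rkf n x y := by
  obtain ⟨h1, h2, h3, h4⟩ := h
  have hn' : (1:ℤ) ≤ n := by exact_mod_cast hn
  unfold prf at huv
  unfold rkf
  split_ifs at huv <;> simp [Prod.ext_iff] at huv <;>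
    obtain ⟨hu, hv⟩ := huv <;> subst hu <;> subst hv <;>
    split_ifs <;> omega

lemma rkf_nonneg {n : ℕ} {x y : ℤ} (hn : 0 < n) (h : inR n x y) : 0 ≤ rkf n x y := by
  obtain ⟨h1, h2, h3, h4⟩ := h
  have hn' : (1:ℤ) ≤ n := by exact_mod_cast hn
  unfold rkf
  split_ifs <;> omega

lemma rkf_zero {n : ℕ} {x y : ℤ} (hn : 0 < n) (h : inR n x y) (h0 : rkf n x y = 0) :
    (x + y = 2*n - 1 ∧ 0 ≤ x ∧ x < n ∧ prf n x y = (x+1, y)) ∨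
    (x + y = 2*n ∧ 0 < x ∧ x ≤ n ∧ prf n x y = (x-1, y)) := by
  obtain ⟨h1, h2, h3, h4⟩ := h
  have hn' : (1:ℤ) ≤ n := by exact_mod_cast hn
  unfold rkf at h0
  unfold prf
  split_ifs at h0 ⊢ <;> simp_all [Prod.ext_iff] <;> omega

lemma pivf_alt {n : ℕ} {x y u v : ℤ} (hn : 0 < n) (h : inR n x y) (hr : 0 < rkf n x y)
    (hp : ¬ pivf n x y) (huv : prf n x y = (u, v)) : pivf n u v := by
  obtain ⟨h1, h2, h3, h4⟩ := h
  have hn' : (1:ℤ) ≤ n := by exact_mod_cast hn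
  unfold rkf at hr
  unfold pivf at hp
  unfold prf at huv
  unfold pivf
  split_ifs at huv <;> simp [Prod.ext_iff] at huv <;>
    obtain ⟨hu, hv⟩ := huv <;> subst hu <;> subst hv <;>
    split_ifs at hr hp ⊢ <;> omega


set_option maxHeartbeats 2000000 in
lemma pivot_cases {n : ℕ} {x y : ℤ} (hn : 0 < n) (h : inR n x y)
    (hpiv : pivf n x y) (hr : 0 < rkf n x y) :
    (x < y ∧ x + y < 2*n-1 ∧ (y-x) % 2 = 0 ∧ prf n x y = (x, y-1) ∧ rkf n x y = 2*n-1-y)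
  ∨ (y < x ∧ 2*(n:ℤ) ≤ x+y ∧ (x+y) % 2 = 1 ∧ prf n x y = (x, y-1) ∧ rkf n x y = 4*n-3-y)
  ∨ (¬(x < y ∧ x + y < 2*n-1) ∧ ¬(y < x ∧ 2*(n:ℤ) ≤ x+y) ∧ 2*(n:ℤ) ≤ 2*y ∧
      (x+y) % 2 = 1 ∧ x+y ≠ 2*n-1 ∧ prf n x y = (x+1, y) ∧ rkf n x y = x-1)
  ∨ (¬(x < y ∧ x + y < 2*n-1) ∧ ¬(y < x ∧ 2*(n:ℤ) ≤ x+y) ∧ ¬(2*(n:ℤ) ≤ 2*y) ∧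
      (x+y) % 2 = 0 ∧ prf n x y = (x+1, y) ∧ rkf n x y = 2*n-1+x) := by
  obtain ⟨h1, h2, h3, h4⟩ := h
  have hn' : (1:ℤ) ≤ n := by exact_mod_cast hn
  unfold pivf at hpiv
  unfold rkf at hr
  unfold prf rkf
  split_ifs at hpiv hr ⊢ <;> simp_all <;> omega




set_option maxHeartbeats 4000000 in
lemma rkf_lt {n : ℕ} {x y a b : ℤ} (hn : 0 < n) (h : inR n x y) (hv : inR n a b)
    (hadj : (a = x+1 ∧ b = y) ∨ (a = x-1 ∧ b = y) ∨ (a = x ∧ b = y+1) ∨ (a = x ∧ b = y-1))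
    (hpiv : pivf n x y) (hr : 0 < rkf n x y) (hne : (a, b) ≠ prf n x y) :
    rkf n a b < rkf n x y := by
  obtain ⟨h1, h2, h3, h4⟩ := h
  obtain ⟨g1, g2, g3, g4⟩ := hv
  have hn' : (1:ℤ) ≤ n := by exact_mod_cast hn
  obtain ⟨hA, hB, hC, hp, he⟩ | ⟨hA, hB, hC, hp, he⟩ | ⟨hA, hB, hC, hD, hE, hp, he⟩ |
      ⟨hA, hB, hC, hD, hp, he⟩ := pivot_cases hn ⟨h1, h2, h3, h4⟩ hpiv hr <;>
    rw [he] <;> rw [hp] at hne <;> simp only [ne_eq, Prod.mk.injEq, not_and] at hne <;>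
    obtain ⟨rfl, rfl⟩ | ⟨rfl, rfl⟩ | ⟨rfl, rfl⟩ | ⟨rfl, rfl⟩ := hadj <;>
    unfold rkf <;> split_ifs <;> omega


lemma mem_squareRegion {n : ℕ} {c : ℤ × ℤ} :
    c ∈ squareRegion n ↔ inR n c.1 c.2 := by
  cases c with
  | mk x y =>
    simp only [squareRegion, Finset.mem_Icc, Prod.le_def, inR]
    constructor <;> intro h <;> simp_all <;> omega

lemma prf_adj' {n : ℕ} (x y : ℤ) :
    prf n x y = (x+1, y) ∨ prf n x y = (x-1, y) ∨ prf n x y = (x, y+1) ∨ prf n x y = (x, y-1) := by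
  unfold prf
  split_ifs <;> simp [Prod.ext_iff]

/-- the tiling associated to the partner function -/
noncomputable def prT (n : ℕ) : Finset (Finset (ℤ × ℤ)) :=
  (squareRegion n).image (fun c => {c, prf n c.1 c.2})

def stairD (n i : ℕ) : Finset (ℤ × ℤ) :=
  {((i:ℤ), (2*(n:ℤ)-1-i)), ((i:ℤ)+1, (2*(n:ℤ)-1-i))}

def stair (n : ℕ) : Finset (Finset (ℤ × ℤ)) := (Finset.range n).image (stairD n)

lemma stair_card (n : ℕ) : (stair n).card = n := by
  rw [stair, Finset.card_image_of_injOn, Finset.card_range]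
  intro i hi j hj hEq
  have h1 : ((i:ℤ), (2*(n:ℤ)-1-i)) ∈ stairD n j := by
    rw [← hEq]; exact Finset.mem_insert_self _ _
  simp only [stairD, Finset.mem_insert, Finset.mem_singleton, Prod.mk.injEq] at h1
  omega

end PKaux

namespace PKaux

lemma prT_tiling {n : ℕ} (hn : 0 < n) : IsDominoTiling (squareRegion n) (prT n) := by
  have hmem : ∀ c ∈ squareRegion n, prf n c.1 c.2 ∈ squareRegion n := by
    intro c hc
    have hcR := mem_squareRegion.mp hc
    rw [mem_squareRegion]
    obtain ⟨h1, h2, h3, h4⟩ := hcR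
    have hn' : (1:ℤ) ≤ n := by exact_mod_cast hn
    unfold prf inR
    split_ifs <;> simp <;> omega
  constructor
  · intro d hd
    simp only [prT, Finset.mem_image] at hd
    obtain ⟨c, hc, rfl⟩ := hd
    have hpR : prf n c.1 c.2 ∈ squareRegion n := hmem c hc
    constructor
    · rcases prf_adj' (n := n) c.1 c.2 with hp | hp | hp | hp
      · exact ⟨c, prf n c.1 c.2, rfl, Or.inl (by rw [hp]; exact Prod.ext (by simp) (by simp))⟩
      · refine ⟨prf n c.1 c.2, c, Finset.pair_comm _ _, Or.inl ?_⟩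
        rw [hp]; exact Prod.ext (by simp) (by simp)
      · exact ⟨c, prf n c.1 c.2, rfl, Or.inr (by rw [hp]; exact Prod.ext (by simp) (by simp))⟩
      · refine ⟨prf n c.1 c.2, c, Finset.pair_comm _ _, Or.inr ?_⟩
        rw [hp]; exact Prod.ext (by simp) (by simp)
    · intro s hs
      rcases Finset.mem_insert.mp hs with rfl | hs'
      · exact hc
      · rw [Finset.mem_singleton] at hs'
        rw [hs']; exact hpR
  · intro s hs
    refine ⟨{s, prf n s.1 s.2}, ⟨Finset.mem_image.mpr ⟨s, hs, rfl⟩, Finset.mem_insert_self _ _⟩, ?_⟩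
    rintro d ⟨hd, hsd⟩
    simp only [prT, Finset.mem_image] at hd
    obtain ⟨c, hc, rfl⟩ := hd
    rcases Finset.mem_insert.mp hsd with rfl | hs'
    · rfl
    · rw [Finset.mem_singleton] at hs'
      have huv : prf n c.1 c.2 = (s.1, s.2) := by rw [← hs']
      have hinv : prf n s.1 s.2 = (c.1, c.2) := prf_invol hn (mem_squareRegion.mp hc) huv
      calc ({c, prf n c.1 c.2} : Finset (ℤ × ℤ)) = {c, s} := by rw [← hs']
        _ = {s, c} := Finset.pair_comm _ _
        _ = {s, prf n s.1 s.2} := by rw [hinv]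



lemma stair_mem_prT {n : ℕ} (hn : 0 < n) : stair n ⊆ prT n := by
  intro d hd
  simp only [stair, Finset.mem_image, Finset.mem_range] at hd
  obtain ⟨i, hi, rfl⟩ := hd
  have hi' : (i:ℤ) < n := by exact_mod_cast hi
  have hn' : (1:ℤ) ≤ n := by exact_mod_cast hn
  have hprf : prf n (i:ℤ) (2*(n:ℤ)-1-i) = ((i:ℤ)+1, 2*(n:ℤ)-1-i) := by
    unfold prf
    split_ifs <;> simp [Prod.ext_iff] <;> omega
  have hc : ((i:ℤ), 2*(n:ℤ)-1-i) ∈ squareRegion n := by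
    rw [mem_squareRegion]
    refine ⟨by omega, by omega, by omega, by omega⟩
  refine Finset.mem_image.mpr ⟨((i:ℤ), 2*(n:ℤ)-1-i), hc, ?_⟩
  show ({((i:ℤ), 2*(n:ℤ)-1-i), prf n (i:ℤ) (2*(n:ℤ)-1-i)} : Finset (ℤ × ℤ)) = stairD n i
  rw [hprf, stairD]

lemma rk_zero_stair {n : ℕ} (hn : 0 < n) {c : ℤ × ℤ} (hc : inR n c.1 c.2)
    (h0 : rkf n c.1 c.2 = 0) : ({c, prf n c.1 c.2} : Finset (ℤ × ℤ)) ∈ stair n := by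
  rcases rkf_zero hn hc h0 with ⟨hsum, hx0, hxn, hp⟩ | ⟨hsum, hx0, hxn, hp⟩
  · refine Finset.mem_image.mpr ⟨c.1.toNat, by rw [Finset.mem_range]; omega, ?_⟩
    have hX : ((c.1.toNat : ℤ)) = c.1 := Int.toNat_of_nonneg hx0
    rw [stairD, hX, show 2*(n:ℤ)-1-c.1 = c.2 from by omega, hp, Prod.mk.eta]
  · refine Finset.mem_image.mpr ⟨(c.1-1).toNat, by rw [Finset.mem_range]; omega, ?_⟩
    have hX : (((c.1-1).toNat : ℤ)) = c.1 - 1 := Int.toNat_of_nonneg (by omega)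
    rw [stairD, hX, show 2*(n:ℤ)-1-(c.1-1) = c.2 from by omega,
      show c.1-1+1 = c.1 from by omega, Prod.mk.eta, hp, Finset.pair_comm]

lemma force {n : ℕ} (hn : 0 < n) {T' : Finset (Finset (ℤ × ℤ))}
    (hT' : IsDominoTiling (squareRegion n) T') (hS : stair n ⊆ T') :
    ∀ r : ℕ, ∀ c : ℤ × ℤ, c ∈ squareRegion n → rkf n c.1 c.2 < r →
      ({c, prf n c.1 c.2} : Finset (ℤ × ℤ)) ∈ T' := by
  intro r
  induction r with
  | zero =>
    intro c hc hr
    exact absurd hr (by have := rkf_nonneg hn (mem_squareRegion.mp hc); omega)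
  | succ r ih =>
    have key : ∀ c : ℤ × ℤ, c ∈ squareRegion n → rkf n c.1 c.2 < r+1 → 0 < rkf n c.1 c.2 →
        pivf n c.1 c.2 → ({c, prf n c.1 c.2} : Finset (ℤ × ℤ)) ∈ T' := by
      intro c hc hr h0 hpiv
      have hcR := mem_squareRegion.mp hc
      have hds := dom_spec hT' hc
      have hq := dom_struct hT' hc
      have hqeq : opp T' c = prf n c.1 c.2 := by
        by_contra hne
        have hqR := mem_squareRegion.mp hq.2.2.1
        have hadj : ((opp T' c).1 = c.1+1 ∧ (opp T' c).2 = c.2) ∨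
            ((opp T' c).1 = c.1-1 ∧ (opp T' c).2 = c.2) ∨
            ((opp T' c).1 = c.1 ∧ (opp T' c).2 = c.2+1) ∨
            ((opp T' c).1 = c.1 ∧ (opp T' c).2 = c.2-1) := by
          rcases hq.2.2.2 with h | h | h | h <;>
            rw [Prod.ext_iff] at h <;> simp at h <;> omega
        have hne' : ((opp T' c).1, (opp T' c).2) ≠ prf n c.1 c.2 := by
          intro hcontra
          exact hne (Prod.mk.eta.symm.trans hcontra)
        have hlt : rkf n (opp T' c).1 (opp T' c).2 < rkf n c.1 c.2 :=
          rkf_lt hn hcR hqR hadj hpiv h0 hne'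
        have hq' := ih (opp T' c) (mem_squareRegion.mpr hqR) (by omega)
        obtain ⟨d0, hd0, huniq⟩ := hT'.2 (opp T' c) hq.2.2.1
        have e1 : dom T' c = d0 := huniq _ ⟨hds.1, by rw [dom_pair hT' hc]; simp⟩
        have e2 : ({opp T' c, prf n (opp T' c).1 (opp T' c).2} : Finset (ℤ × ℤ)) = d0 :=
          huniq _ ⟨hq', Finset.mem_insert_self _ _⟩
        have hcmem : c ∈ ({opp T' c, prf n (opp T' c).1 (opp T' c).2} : Finset (ℤ × ℤ)) := by
          rw [e2, ← e1, dom_pair hT' hc]; simp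
        rcases Finset.mem_insert.mp hcmem with hcq | hcq
        · exact hq.2.1 hcq.symm
        · rw [Finset.mem_singleton] at hcq
          have hqc : prf n (opp T' c).1 (opp T' c).2 = (c.1, c.2) :=
            hcq.symm.trans Prod.mk.eta.symm
          have hfin : prf n c.1 c.2 = ((opp T' c).1, (opp T' c).2) := prf_invol hn hqR hqc
          exact hne' hfin.symm
      have : dom T' c = {c, prf n c.1 c.2} := by
        rw [dom_pair hT' hc, hqeq]
      rw [← this]
      exact hds.1
    intro c hc hr
    have hcR := mem_squareRegion.mp hc
    rcases eq_or_lt_of_le (rkf_nonneg hn hcR) with h0 | h0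
    · exact hS (rk_zero_stair hn hcR h0.symm)
    · by_cases hpiv : pivf n c.1 c.2
      · exact key c hc hr h0 hpiv
      · have hpp : prf n c.1 c.2 = ((prf n c.1 c.2).1, (prf n c.1 c.2).2) := Prod.mk.eta.symm
        have hpR : inR n (prf n c.1 c.2).1 (prf n c.1 c.2).2 := prf_mem hn hcR hpp
        have hpiv' := pivf_alt hn hcR h0 hpiv hpp
        have hrk := rkf_prf hn hcR hpp
        have h' := key (prf n c.1 c.2) (mem_squareRegion.mpr hpR) (by omega) (by omega) hpiv'
        have hinv : prf n (prf n c.1 c.2).1 (prf n c.1 c.2).2 = (c.1, c.2) :=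
          prf_invol hn hcR hpp
        rw [hinv] at h'
        have h'' : ({prf n c.1 c.2, (c.1, c.2)} : Finset (ℤ × ℤ)) = {c, prf n c.1 c.2} := by
          rw [Prod.mk.eta, Finset.pair_comm]
        rw [h''] at h'
        exact h'

theorem prT_forced {n : ℕ} (hn : 0 < n) {T' : Finset (Finset (ℤ × ℤ))}
    (hT' : IsDominoTiling (squareRegion n) T') (hS : stair n ⊆ T') : T' = prT n := by
  apply tiling_subset_eq (prT_tiling hn) hT'
  intro d hd
  simp only [prT, Finset.mem_image] at hd
  obtain ⟨c, hc, rfl⟩ := hd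
  have hcR := mem_squareRegion.mp hc
  refine force hn hT' hS ((rkf n c.1 c.2).toNat + 1) c hc ?_
  have h1 := rkf_nonneg hn hcR
  omega



section LB

def swapD (d : Finset (ℤ × ℤ)) : Finset (ℤ × ℤ) := d.image Prod.swap

lemma swapD_swapD (d : Finset (ℤ × ℤ)) : swapD (swapD d) = d := by
  simp [swapD, Finset.image_image, Function.comp_def]

lemma mem_swapD {d : Finset (ℤ × ℤ)} {s : ℤ × ℤ} : s ∈ swapD d ↔ s.swap ∈ d := by
  constructor
  · intro h
    obtain ⟨u, hu, rfl⟩ := Finset.mem_image.mp h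
    simpa using hu
  · intro h
    exact Finset.mem_image.mpr ⟨s.swap, h, Prod.swap_swap s⟩

def Ttau (T : Finset (Finset (ℤ × ℤ))) : Finset (Finset (ℤ × ℤ)) := T.image swapD

lemma mem_Ttau {T : Finset (Finset (ℤ × ℤ))} {d : Finset (ℤ × ℤ)} :
    d ∈ Ttau T ↔ swapD d ∈ T := by
  constructor
  · intro h
    obtain ⟨e, he, rfl⟩ := Finset.mem_image.mp h
    rwa [swapD_swapD]
  · intro h
    exact Finset.mem_image.mpr ⟨swapD d, h, swapD_swapD d⟩

lemma swap_mem_R {n : ℕ} {c : ℤ × ℤ} :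
    c.swap ∈ squareRegion n ↔ c ∈ squareRegion n := by
  rw [mem_squareRegion, mem_squareRegion]
  cases c with
  | mk x y => unfold inR; simp; omega

variable {n : ℕ} {T : Finset (Finset (ℤ × ℤ))}

lemma Ttau_tiling (hT : IsDominoTiling (squareRegion n) T) :
    IsDominoTiling (squareRegion n) (Ttau T) := by
  constructor
  · intro d hd
    have hsw := mem_Ttau.mp hd
    obtain ⟨⟨a, b, hab, hstep⟩, hcells⟩ := hT.1 _ hsw
    have hd' : d = swapD (swapD d) := (swapD_swapD d).symm
    constructor
    · refine ⟨a.swap, b.swap, ?_, ?_⟩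
      · rw [hd', hab]
        rw [swapD, Finset.image_insert, Finset.image_singleton]
      · rcases hstep with h | h
        · refine Or.inr ?_
          have h1 : b.swap - a.swap = (b - a).swap := rfl
          rw [h1, h]; rfl
        · refine Or.inl ?_
          have h1 : b.swap - a.swap = (b - a).swap := rfl
          rw [h1, h]; rfl
    · intro s hs
      have : s.swap ∈ swapD d := mem_swapD.mpr (by rwa [Prod.swap_swap])
      exact swap_mem_R.mp (hcells _ this)
  · intro s hs
    have hsR : s.swap ∈ squareRegion n := swap_mem_R.mpr hs
    have hd := dom_spec hT hsR
    refine ⟨swapD (dom T s.swap), ⟨mem_Ttau.mpr (by rw [swapD_swapD]; exact hd.1), mem_swapD.mpr hd.2⟩, ?_⟩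
    rintro d ⟨hdT, hsd⟩
    have h1 : s.swap ∈ swapD d := mem_swapD.mpr (by rwa [Prod.swap_swap])
    have h2 : swapD d = dom T s.swap := dom_eq hT hsR (mem_Ttau.mp hdT) h1
    rw [← h2, swapD_swapD]

lemma dom_Ttau (hT : IsDominoTiling (squareRegion n) T) {s : ℤ × ℤ}
    (hs : s ∈ squareRegion n) : dom (Ttau T) s = swapD (dom T s.swap) := by
  have hsR : s.swap ∈ squareRegion n := swap_mem_R.mpr hs
  refine (dom_eq (Ttau_tiling hT) hs ?_ ?_).symm
  · exact mem_Ttau.mpr (by rw [swapD_swapD]; exact (dom_spec hT hsR).1)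
  · exact mem_swapD.mpr (dom_spec hT hsR).2

lemma opp_Ttau (hT : IsDominoTiling (squareRegion n) T) {s : ℤ × ℤ}
    (hs : s ∈ squareRegion n) : opp (Ttau T) s = (opp T s.swap).swap := by
  have hsR : s.swap ∈ squareRegion n := swap_mem_R.mpr hs
  have h1 := dom_pair (Ttau_tiling hT) hs
  have h2 : dom (Ttau T) s = {s, (opp T s.swap).swap} := by
    rw [dom_Ttau hT hs, dom_pair hT hsR, swapD, Finset.image_insert,
      Finset.image_singleton, Prod.swap_swap]
  have h3 : opp (Ttau T) s ∈ ({s, (opp T s.swap).swap} : Finset (ℤ × ℤ)) := by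
    rw [← h2, h1]; simp
  rcases Finset.mem_insert.mp h3 with h | h
  · exact absurd h (opp_ne (Ttau_tiling hT) hs)
  · exact Finset.mem_singleton.mp h

end LB


section LB2

variable {n : ℕ} {T : Finset (Finset (ℤ × ℤ))}

noncomputable def Delta (n : ℕ) (T : Finset (Finset (ℤ × ℤ))) : Finset (ℤ × ℤ) :=
  (squareRegion n).filter (fun s => dom T s ∉ Ttau T)

lemma mem_Delta {s : ℤ × ℤ} :
    s ∈ Delta n T ↔ s ∈ squareRegion n ∧ dom T s ∉ Ttau T := Finset.mem_filter

lemma Delta_subset : Delta n T ⊆ squareRegion n := Finset.filter_subset _ _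

lemma opp_mem_Delta (hT : IsDominoTiling (squareRegion n) T) {s : ℤ × ℤ}
    (hs : s ∈ Delta n T) : opp T s ∈ Delta n T := by
  obtain ⟨hsR, hnd⟩ := mem_Delta.mp hs
  refine mem_Delta.mpr ⟨opp_mem hT hsR, ?_⟩
  have : dom T (opp T s) = dom T s :=
    (dom_eq hT (opp_mem hT hsR) (dom_spec hT hsR).1 (by rw [dom_pair hT hsR]; simp)).symm
  rwa [this]

lemma oppt_mem_Delta (hT : IsDominoTiling (squareRegion n) T) {s : ℤ × ℤ}
    (hs : s ∈ Delta n T) : opp (Ttau T) s ∈ Delta n T := by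
  obtain ⟨hsR, hnd⟩ := mem_Delta.mp hs
  have hTt := Ttau_tiling hT
  have hqR : opp (Ttau T) s ∈ squareRegion n := opp_mem hTt hsR
  refine mem_Delta.mpr ⟨hqR, ?_⟩
  intro hbad
  have e1 : dom T (opp (Ttau T) s) = dom (Ttau T) (opp (Ttau T) s) :=
    dom_eq hTt hqR hbad (dom_spec hT hqR).2
  have e2 : dom (Ttau T) s = dom (Ttau T) (opp (Ttau T) s) :=
    dom_eq hTt hqR (dom_spec hTt hsR).1 (by rw [dom_pair hTt hsR]; simp)
  have hsmem : s ∈ dom T (opp (Ttau T) s) := by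
    rw [e1, ← e2, dom_pair hTt hsR]; simp
  have e3 : dom T (opp (Ttau T) s) = dom T s :=
    dom_eq hT hsR (dom_spec hT hqR).1 hsmem
  apply hnd
  rw [← e3, e1, ← e2]
  exact (dom_spec hTt hsR).1

lemma swap_mem_Delta (hT : IsDominoTiling (squareRegion n) T) {s : ℤ × ℤ}
    (hs : s ∈ Delta n T) : s.swap ∈ Delta n T := by
  obtain ⟨hsR, hnd⟩ := mem_Delta.mp hs
  have hswR : s.swap ∈ squareRegion n := swap_mem_R.mpr hsR
  have hTt := Ttau_tiling hT
  refine mem_Delta.mpr ⟨hswR, ?_⟩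
  intro hbad
  have h1 : swapD (dom T s.swap) ∈ T := mem_Ttau.mp hbad
  have h2 : swapD (dom T s.swap) = dom (Ttau T) s := (dom_Ttau hT hsR).symm
  have h3 : s ∈ dom (Ttau T) s := (dom_spec hTt hsR).2
  have h4 : dom (Ttau T) s = dom T s := by
    rw [h2] at h1
    exact dom_eq hT hsR h1 h3
  apply hnd
  rw [← h4]
  exact (dom_spec hTt hsR).1

lemma swap_mem_Delta_iff (hT : IsDominoTiling (squareRegion n) T) {s : ℤ × ℤ} :
    s.swap ∈ Delta n T ↔ s ∈ Delta n T := by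
  constructor
  · intro h
    have := swap_mem_Delta hT h
    rwa [Prod.swap_swap] at this
  · exact swap_mem_Delta hT

lemma opp_ne_oppt (hT : IsDominoTiling (squareRegion n) T) {s : ℤ × ℤ}
    (hs : s ∈ Delta n T) : opp T s ≠ opp (Ttau T) s := by
  obtain ⟨hsR, hnd⟩ := mem_Delta.mp hs
  have hTt := Ttau_tiling hT
  intro h
  apply hnd
  have : dom T s = dom (Ttau T) s := by
    rw [dom_pair hT hsR, dom_pair hTt hsR, h]
  rw [this]
  exact (dom_spec hTt hsR).1

lemma diag_mem_Delta (hT : IsDominoTiling (squareRegion n) T) {i : ℤ}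
    (h0 : 0 ≤ i) (h1 : i < 2*n) : ((i, i) : ℤ × ℤ) ∈ Delta n T := by
  have hcR : ((i, i) : ℤ × ℤ) ∈ squareRegion n := by
    rw [mem_squareRegion]; exact ⟨h0, h1, h0, h1⟩
  have hTt := Ttau_tiling hT
  refine mem_Delta.mpr ⟨hcR, ?_⟩
  intro hbad
  have e1 : dom T (i, i) = dom (Ttau T) (i, i) :=
    dom_eq hTt hcR hbad (dom_spec hT hcR).2
  have hsw : ((i, i) : ℤ × ℤ).swap = (i, i) := rfl
  have e2 : dom (Ttau T) (i, i) = swapD (dom T (i, i)) := by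
    rw [dom_Ttau hT hcR, hsw]
  have hopp : opp T (i, i) ∈ swapD (dom T (i, i)) := by
    rw [← e2, ← e1, dom_pair hT hcR]; simp
  have hopp2 : (opp T (i, i)).swap ∈ dom T (i, i) := mem_swapD.mp hopp
  rcases dom_of_mem hT hcR hopp2 with h | h
  · have hstep := (dom_struct hT hcR).2.2.2
    have h1 : (opp T (i, i)).2 = i := congrArg Prod.fst h
    have h2 : (opp T (i, i)).1 = i := congrArg Prod.snd h
    rcases hstep with hh | hh | hh | hh <;>
      · have c1 : (opp T (i,i)).1 - i = _ := congrArg Prod.fst hh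
        have c2 : (opp T (i,i)).2 - i = _ := congrArg Prod.snd hh
        simp at c1 c2
        omega
  · have h1 : (opp T (i, i)).2 = (opp T (i, i)).1 := congrArg Prod.fst h
    have hstep := (dom_struct hT hcR).2.2.2
    rcases hstep with hh | hh | hh | hh <;>
      · have c1 : (opp T (i,i)).1 - i = _ := congrArg Prod.fst hh
        have c2 : (opp T (i,i)).2 - i = _ := congrArg Prod.snd hh
        simp at c1 c2
        omega

lemma opp_colorflip (hT : IsDominoTiling (squareRegion n) T) {s : ℤ × ℤ}
    (hs : s ∈ squareRegion n) :
    ((opp T s).1 + (opp T s).2 + s.1 + s.2) % 2 = 1 := by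
  have hstep := (dom_struct hT hs).2.2.2
  rcases hstep with hh | hh | hh | hh <;>
    · have c1 : (opp T s).1 - s.1 = _ := congrArg Prod.fst hh
      have c2 : (opp T s).2 - s.2 = _ := congrArg Prod.snd hh
      simp at c1 c2
      omega

end LB2


section LB3

variable {n : ℕ} {T : Finset (Finset (ℤ × ℤ))}

noncomputable def Ff (n : ℕ) (T : Finset (Finset (ℤ × ℤ))) : ℤ × ℤ → ℤ × ℤ :=
  fun s => if s ∈ Delta n T then opp T s else s

noncomputable def Gf (n : ℕ) (T : Finset (Finset (ℤ × ℤ))) : ℤ × ℤ → ℤ × ℤ :=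
  fun s => if s ∈ Delta n T then opp (Ttau T) s else s

lemma Ff_invol (hT : IsDominoTiling (squareRegion n) T) (s : ℤ × ℤ) :
    Ff n T (Ff n T s) = s := by
  unfold Ff
  by_cases h : s ∈ Delta n T
  · rw [if_pos h, if_pos (opp_mem_Delta hT h), opp_opp hT (Delta_subset h)]
  · rw [if_neg h, if_neg h]

lemma Gf_invol (hT : IsDominoTiling (squareRegion n) T) (s : ℤ × ℤ) :
    Gf n T (Gf n T s) = s := by
  unfold Gf
  by_cases h : s ∈ Delta n T
  · rw [if_pos h, if_pos (oppt_mem_Delta hT h), opp_opp (Ttau_tiling hT) (Delta_subset h)]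
  · rw [if_neg h, if_neg h]

noncomputable def Fp (hT : IsDominoTiling (squareRegion n) T) : Equiv.Perm (ℤ × ℤ) :=
  ⟨Ff n T, Ff n T, fun s => Ff_invol hT s, fun s => Ff_invol hT s⟩

noncomputable def Gp (hT : IsDominoTiling (squareRegion n) T) : Equiv.Perm (ℤ × ℤ) :=
  ⟨Gf n T, Gf n T, fun s => Gf_invol hT s, fun s => Gf_invol hT s⟩

noncomputable def Pp (hT : IsDominoTiling (squareRegion n) T) : Equiv.Perm (ℤ × ℤ) :=
  Gp hT * Fp hT

lemma Fp_apply (hT : IsDominoTiling (squareRegion n) T) (s : ℤ × ℤ) :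
    Fp hT s = Ff n T s := rfl

lemma Gp_apply (hT : IsDominoTiling (squareRegion n) T) (s : ℤ × ℤ) :
    Gp hT s = Gf n T s := rfl

lemma Pp_apply (hT : IsDominoTiling (squareRegion n) T) (s : ℤ × ℤ) :
    Pp hT s = Gf n T (Ff n T s) := rfl

def Sp : Equiv.Perm (ℤ × ℤ) := Equiv.prodComm ℤ ℤ

lemma Sp_apply (s : ℤ × ℤ) : Sp s = s.swap := rfl

lemma Sp_mul_Sp : Sp * Sp = 1 := by
  apply Equiv.ext
  intro s
  exact Prod.swap_swap s

lemma Sp_inv : Sp⁻¹ = Sp := inv_eq_of_mul_eq_one_right Sp_mul_Sp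

lemma Fp_mul_Fp (hT : IsDominoTiling (squareRegion n) T) : Fp hT * Fp hT = 1 := by
  apply Equiv.ext
  intro s
  exact Ff_invol hT s

lemma Gp_mul_Gp (hT : IsDominoTiling (squareRegion n) T) : Gp hT * Gp hT = 1 := by
  apply Equiv.ext
  intro s
  exact Gf_invol hT s

lemma Fp_inv (hT : IsDominoTiling (squareRegion n) T) : (Fp hT)⁻¹ = Fp hT :=
  inv_eq_of_mul_eq_one_right (Fp_mul_Fp hT)

lemma Gp_inv (hT : IsDominoTiling (squareRegion n) T) : (Gp hT)⁻¹ = Gp hT :=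
  inv_eq_of_mul_eq_one_right (Gp_mul_Gp hT)

lemma Pp_inv (hT : IsDominoTiling (squareRegion n) T) :
    (Pp hT)⁻¹ = Fp hT * Gp hT := by
  rw [Pp, mul_inv_rev, Fp_inv, Gp_inv]

lemma swap_Ff (hT : IsDominoTiling (squareRegion n) T) (s : ℤ × ℤ) :
    Ff n T s.swap = (Gf n T s).swap := by
  by_cases h : s ∈ Delta n T
  · have hsw : s.swap ∈ Delta n T := swap_mem_Delta hT h
    unfold Ff Gf
    rw [if_pos hsw, if_pos h, opp_Ttau hT (Delta_subset h), Prod.swap_swap]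
  · have hsw : s.swap ∉ Delta n T := fun hc => h ((swap_mem_Delta_iff hT).mp hc)
    unfold Ff Gf
    rw [if_neg hsw, if_neg h]

lemma swap_Gf (hT : IsDominoTiling (squareRegion n) T) (s : ℤ × ℤ) :
    Gf n T s.swap = (Ff n T s).swap := by
  have h := swap_Ff hT s.swap
  rw [Prod.swap_swap] at h
  rw [h, Prod.swap_swap]

lemma conj_Pp (hT : IsDominoTiling (squareRegion n) T) :
    Sp * Pp hT * Sp = (Pp hT)⁻¹ := by
  rw [Pp_inv]
  apply Equiv.ext
  intro s
  show Sp ((Pp hT) (Sp s)) = (Fp hT) ((Gp hT) s)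
  rw [Sp_apply, Pp_apply, Sp_apply, Fp_apply, Gp_apply]
  rw [swap_Ff hT, swap_Gf hT, Prod.swap_swap]

lemma conj_Pp_zpow (hT : IsDominoTiling (squareRegion n) T) (k : ℤ) :
    Sp * (Pp hT)^k * Sp = (Pp hT)^(-k) := by
  have h1 := map_zpow (MulAut.conj Sp) (Pp hT) k
  rw [MulAut.conj_apply, MulAut.conj_apply, Sp_inv] at h1
  rw [h1, conj_Pp hT, inv_zpow, zpow_neg]

lemma fn_inv_zpow {β : Type*} (e : Equiv.Perm (ℤ × ℤ)) (fm : ℤ × ℤ → β)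
    (h : ∀ s, fm (e s) = fm s) : ∀ (k : ℤ) (s : ℤ × ℤ), fm ((e^k) s) = fm s := by
  have hinv : ∀ x, fm (e⁻¹ x) = fm x := by
    intro x
    have h2 := h (e⁻¹ x)
    rw [show e (e⁻¹ x) = x from e.apply_symm_apply x] at h2
    exact h2.symm
  intro k
  induction k using Int.induction_on with
  | zero => simp
  | succ k ih =>
    intro s
    rw [show (k:ℤ)+1 = 1+(k:ℤ) by ring, zpow_add, zpow_one, Equiv.Perm.mul_apply, h, ih]
  | pred k ih =>
    intro s
    rw [show -(k:ℤ)-1 = -1 + -(k:ℤ) by ring, zpow_add, Equiv.Perm.mul_apply,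
      zpow_neg_one, hinv, ih]

lemma Pp_mem_Delta (hT : IsDominoTiling (squareRegion n) T) (s : ℤ × ℤ) :
    (decide ((Pp hT) s ∈ Delta n T) : Bool) = decide (s ∈ Delta n T) := by
  rw [Pp_apply]
  by_cases h : s ∈ Delta n T
  · have h1 : Ff n T s ∈ Delta n T := by rw [Ff]; rw [if_pos h]; exact opp_mem_Delta hT h
    have h2 : Gf n T (Ff n T s) ∈ Delta n T := by
      rw [Gf, if_pos h1]; exact oppt_mem_Delta hT h1
    simp [h, h2]
  · have h1 : Ff n T s = s := by rw [Ff, if_neg h]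
    have h2 : Gf n T s = s := by rw [Gf, if_neg h]
    rw [h1, h2]

lemma Pp_zpow_mem_Delta (hT : IsDominoTiling (squareRegion n) T) (k : ℤ) (s : ℤ × ℤ)
    (hs : s ∈ Delta n T) : ((Pp hT)^k) s ∈ Delta n T := by
  have := fn_inv_zpow (Pp hT) (fun t => (decide (t ∈ Delta n T) : Bool))
    (fun t => Pp_mem_Delta hT t) k s
  simp only [decide_eq_decide] at this
  exact this.mpr hs

lemma Pp_color (hT : IsDominoTiling (squareRegion n) T) (s : ℤ × ℤ) :
    (((Pp hT) s).1 + ((Pp hT) s).2) % 2 = (s.1 + s.2) % 2 := by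
  rw [Pp_apply]
  by_cases h : s ∈ Delta n T
  · have h1 : Ff n T s ∈ Delta n T := by rw [Ff, if_pos h]; exact opp_mem_Delta hT h
    have c1 : ((opp T s).1 + (opp T s).2 + s.1 + s.2) % 2 = 1 :=
      opp_colorflip hT (Delta_subset h)
    have hF : Ff n T s = opp T s := by rw [Ff, if_pos h]
    have c2 : ((opp (Ttau T) (Ff n T s)).1 + (opp (Ttau T) (Ff n T s)).2
        + (Ff n T s).1 + (Ff n T s).2) % 2 = 1 :=
      opp_colorflip (Ttau_tiling hT) (Delta_subset h1)
    have hG : Gf n T (Ff n T s) = opp (Ttau T) (Ff n T s) := by rw [Gf, if_pos h1]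
    rw [hG, hF] at *
    omega
  · have h1 : Ff n T s = s := by rw [Ff, if_neg h]
    have h2 : Gf n T s = s := by rw [Gf, if_neg h]
    rw [h1, h2]

lemma Pp_zpow_color (hT : IsDominoTiling (squareRegion n) T) (k : ℤ) (s : ℤ × ℤ) :
    ((((Pp hT)^k) s).1 + (((Pp hT)^k) s).2) % 2 = (s.1 + s.2) % 2 :=
  fn_inv_zpow (Pp hT) (fun t => (t.1 + t.2) % 2) (fun t => Pp_color hT t) k s

lemma Ff_colorflip (hT : IsDominoTiling (squareRegion n) T) {s : ℤ × ℤ}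
    (hs : s ∈ Delta n T) :
    ((Ff n T s).1 + (Ff n T s).2 + s.1 + s.2) % 2 = 1 := by
  rw [Ff, if_pos hs]
  exact opp_colorflip hT (Delta_subset hs)

end LB3


section LB4

variable {n : ℕ} {T : Finset (Finset (ℤ × ℤ))}

lemma fix_zpow {α : Type*} (e : Equiv.Perm α) (x : α) (h : e x = x) :
    ∀ k : ℤ, (e^k) x = x := by
  have hinv : e⁻¹ x = x := by
    conv_lhs => rw [← h]
    rw [show e⁻¹ (e x) = x from e.symm_apply_apply x]
  intro k
  induction k using Int.induction_on with
  | zero => simp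
  | succ k ih =>
    rw [show (k:ℤ)+1 = 1+(k:ℤ) by ring, zpow_add, zpow_one, Equiv.Perm.mul_apply, ih, h]
  | pred k ih =>
    rw [show -(k:ℤ)-1 = -1 + -(k:ℤ) by ring, zpow_add, Equiv.Perm.mul_apply,
      zpow_neg_one, ih, hinv]

lemma exists_period (hT : IsDominoTiling (squareRegion n) T) {s0 : ℤ × ℤ}
    (hs0 : s0 ∈ Delta n T) : ∃ m : ℕ, 0 < m ∧ ((Pp hT)^m) s0 = s0 := by
  have hmap : ∀ k ∈ Finset.range ((Delta n T).card + 1),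
      ((Pp hT)^k) s0 ∈ Delta n T := by
    intro k _
    have h := Pp_zpow_mem_Delta hT (k : ℤ) s0 hs0
    rwa [zpow_natCast] at h
  have hcard : (Delta n T).card < (Finset.range ((Delta n T).card + 1)).card := by
    rw [Finset.card_range]; omega
  obtain ⟨a, ha, b, hb, hab, heq⟩ :=
    Finset.exists_ne_map_eq_of_card_lt_of_maps_to hcard hmap
  have key : ∀ a b : ℕ, a < b → ((Pp hT)^a) s0 = ((Pp hT)^b) s0 →
      ∃ m : ℕ, 0 < m ∧ ((Pp hT)^m) s0 = s0 := by
    intro a b hlt he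
    refine ⟨b - a, by omega, ?_⟩
    have h1 : ((Pp hT)^b) s0 = ((Pp hT)^a) (((Pp hT)^(b-a)) s0) := by
      rw [← Equiv.Perm.mul_apply, ← pow_add]
      congr 2
      omega
    have h2 : ((Pp hT)^a) (((Pp hT)^(b-a)) s0) = ((Pp hT)^a) s0 := by
      rw [← h1, ← he]
    exact ((Pp hT)^a).injective h2
  rcases Nat.lt_or_ge a b with h | h
  · exact key a b h heq
  · exact key b a (by omega) heq.symm

lemma period_dvd (hT : IsDominoTiling (squareRegion n) T) {s0 : ℤ × ℤ} {m : ℕ}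
    (hm : 0 < m) (hfix : ((Pp hT)^m) s0 = s0)
    (hmin : ∀ j : ℕ, 0 < j → j < m → ((Pp hT)^j) s0 ≠ s0) :
    ∀ k : ℤ, ((Pp hT)^k) s0 = s0 → (m:ℤ) ∣ k := by
  intro k hk
  have hfix' : ((Pp hT)^(m:ℤ)) s0 = s0 := by rw [zpow_natCast]; exact hfix
  have hfixz : ∀ q : ℤ, ((Pp hT)^((m:ℤ) * q)) s0 = s0 := by
    intro q
    rw [zpow_mul]
    exact fix_zpow _ _ hfix' q
  have hm' : (m:ℤ) ≠ 0 := by omega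
  have hdm : (m:ℤ) * (k / (m:ℤ)) + k % (m:ℤ) = k := Int.mul_ediv_add_emod k (m:ℤ)
  have h2 : ((Pp hT)^(k % (m:ℤ))) s0 = s0 := by
    have e1 : ((Pp hT)^k) s0 = ((Pp hT)^((m:ℤ) * (k/(m:ℤ)))) (((Pp hT)^(k % (m:ℤ))) s0) := by
      rw [← Equiv.Perm.mul_apply, ← zpow_add, hdm]
    have e2 : ((Pp hT)^((m:ℤ) * (k/(m:ℤ)))) (((Pp hT)^(k % (m:ℤ))) s0)
        = ((Pp hT)^((m:ℤ) * (k/(m:ℤ)))) s0 := by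
      rw [← e1, hk, hfixz]
    exact ((Pp hT)^((m:ℤ) * (k/(m:ℤ)))).injective e2
  have hr0 : 0 ≤ k % (m:ℤ) := Int.emod_nonneg k hm'
  have hrm : k % (m:ℤ) < (m:ℤ) := Int.emod_lt_of_pos k (by omega)
  rcases eq_or_lt_of_le hr0 with h0 | h0
  · exact Int.dvd_of_emod_eq_zero h0.symm
  · exfalso
    have htn : ((k % (m:ℤ)).toNat : ℤ) = k % (m:ℤ) := Int.toNat_of_nonneg hr0
    have : ((Pp hT)^((k % (m:ℤ)).toNat)) s0 = s0 := by
      rw [← zpow_natCast, htn]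
      exact h2
    exact hmin _ (by omega) (by omega) this

end LB4


section LB5

variable {n : ℕ} {T : Finset (Finset (ℤ × ℤ))}

lemma FPF (hT : IsDominoTiling (squareRegion n) T) :
    Fp hT * Pp hT * Fp hT = (Pp hT)⁻¹ := by
  rw [Pp_inv, Pp]
  have h1 : (Gp hT * Fp hT) * Fp hT = Gp hT := by
    rw [mul_assoc, Fp_mul_Fp, mul_one]
  rw [mul_assoc (Fp hT) (Gp hT * Fp hT) (Fp hT), h1]

lemma FPk (hT : IsDominoTiling (squareRegion n) T) (k : ℤ) :
    Fp hT * (Pp hT)^k * Fp hT = (Pp hT)^(-k) := by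
  have h1 := map_zpow (MulAut.conj (Fp hT)) (Pp hT) k
  rw [MulAut.conj_apply, MulAut.conj_apply, Fp_inv] at h1
  rw [h1, FPF hT, inv_zpow, zpow_neg]

lemma Fp_Pp_zpow (hT : IsDominoTiling (squareRegion n) T) (k : ℤ) (x : ℤ × ℤ) :
    Fp hT (((Pp hT)^k) x) = ((Pp hT)^(-k)) (Fp hT x) := by
  have h := DFunLike.congr_fun (FPk hT k) (Fp hT x)
  simp only [Equiv.Perm.mul_apply] at h
  rw [show Fp hT (Fp hT x) = x from Ff_invol hT x] at h
  exact h

/-- the orbit relation -/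
def relC (hT : IsDominoTiling (squareRegion n) T) (a b : ℤ × ℤ) : Prop :=
  ∃ k : ℤ, b = ((Pp hT)^k) a ∨ b = Fp hT (((Pp hT)^k) a)

lemma relC_refl (hT : IsDominoTiling (squareRegion n) T) (a : ℤ × ℤ) : relC hT a a :=
  ⟨0, Or.inl (by simp)⟩

lemma Pp_hplus (hT : IsDominoTiling (squareRegion n) T) (j k : ℤ) (x : ℤ × ℤ) :
    ((Pp hT)^j) (((Pp hT)^k) x) = ((Pp hT)^(j+k)) x := by
  rw [← Equiv.Perm.mul_apply, ← zpow_add]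

lemma Pp_hswapFP (hT : IsDominoTiling (squareRegion n) T) (k : ℤ) (x : ℤ × ℤ) :
    ((Pp hT)^k) (Fp hT x) = Fp hT (((Pp hT)^(-k)) x) := by
  rw [Fp_Pp_zpow hT (-k), neg_neg]

lemma Pp_hFF (hT : IsDominoTiling (squareRegion n) T) (y : ℤ × ℤ) :
    Fp hT (Fp hT y) = y := Ff_invol hT y

lemma relC_symm {hT : IsDominoTiling (squareRegion n) T} {a b : ℤ × ℤ}
    (h : relC hT a b) : relC hT b a := by
  obtain ⟨k, h | h⟩ := h
  · refine ⟨-k, Or.inl ?_⟩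
    rw [h, Pp_hplus hT (-k) k a, neg_add_cancel, zpow_zero, Equiv.Perm.one_apply]
  · refine ⟨k, Or.inr ?_⟩
    rw [h, Pp_hswapFP hT k, Pp_hFF hT, Pp_hplus hT (-k) k a, neg_add_cancel,
      zpow_zero, Equiv.Perm.one_apply]

lemma relC_trans {hT : IsDominoTiling (squareRegion n) T} {a b c : ℤ × ℤ}
    (h1 : relC hT a b) (h2 : relC hT b c) : relC hT a c := by
  obtain ⟨k, hk | hk⟩ := h1 <;> obtain ⟨j, hj | hj⟩ := h2
  · exact ⟨j + k, Or.inl (by rw [hj, hk, Pp_hplus hT j k a])⟩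
  · exact ⟨j + k, Or.inr (by rw [hj, hk, Pp_hplus hT j k a])⟩
  · exact ⟨-j + k, Or.inr (by
      rw [hj, hk, Pp_hswapFP hT j, Pp_hplus hT (-j) k a])⟩
  · exact ⟨-j + k, Or.inl (by
      rw [hj, hk, Pp_hswapFP hT j, Pp_hFF hT, Pp_hplus hT (-j) k a])⟩

end LB5


section LB6

variable {n : ℕ} {T : Finset (Finset (ℤ × ℤ))}

noncomputable def compC (hT : IsDominoTiling (squareRegion n) T) (s0 : ℤ × ℤ) :
    Finset (ℤ × ℤ) :=
  @Finset.filter _ (relC hT s0) (Classical.decPred _) (Delta n T)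

lemma mem_compC {hT : IsDominoTiling (squareRegion n) T} {s0 s : ℤ × ℤ} :
    s ∈ compC hT s0 ↔ s ∈ Delta n T ∧ relC hT s0 s :=
  @Finset.mem_filter _ (relC hT s0) (Classical.decPred _) (Delta n T) s

lemma compC_subset {hT : IsDominoTiling (squareRegion n) T} {s0 : ℤ × ℤ} :
    compC hT s0 ⊆ Delta n T := fun _ h => (mem_compC.mp h).1

lemma mem_compC_self {hT : IsDominoTiling (squareRegion n) T} {s0 : ℤ × ℤ}
    (hs0 : s0 ∈ Delta n T) : s0 ∈ compC hT s0 :=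
  mem_compC.mpr ⟨hs0, relC_refl hT s0⟩

lemma compC_eq_of_mem {hT : IsDominoTiling (squareRegion n) T} {s0 s : ℤ × ℤ}
    (hs : s ∈ compC hT s0) : compC hT s0 = compC hT s := by
  obtain ⟨hsD, hrel⟩ := mem_compC.mp hs
  ext x
  rw [mem_compC, mem_compC]
  constructor
  · rintro ⟨hxD, hx⟩
    exact ⟨hxD, relC_trans (relC_symm hrel) hx⟩
  · rintro ⟨hxD, hx⟩
    exact ⟨hxD, relC_trans hrel hx⟩

lemma Gf_eq_Pp_Fp (hT : IsDominoTiling (squareRegion n) T) (x : ℤ × ℤ) :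
    Gf n T x = Pp hT (Fp hT x) := by
  rw [Pp_apply]
  show Gf n T x = Gf n T (Ff n T (Ff n T x))
  rw [Ff_invol hT]

lemma compC_closed_F {hT : IsDominoTiling (squareRegion n) T} {s0 s : ℤ × ℤ}
    (hs : s ∈ compC hT s0) : Ff n T s ∈ compC hT s0 := by
  obtain ⟨hsD, k, hk | hk⟩ := mem_compC.mp hs
  · refine mem_compC.mpr ⟨?_, k, Or.inr (by rw [← hk]; rfl)⟩
    have : Ff n T s = opp T s := by rw [Ff, if_pos hsD]
    rw [this]; exact opp_mem_Delta hT hsD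
  · refine mem_compC.mpr ⟨?_, k, Or.inl ?_⟩
    · have : Ff n T s = opp T s := by rw [Ff, if_pos hsD]
      rw [this]; exact opp_mem_Delta hT hsD
    · show Ff n T s = _
      rw [hk]
      exact Pp_hFF hT _
  
lemma compC_closed_G {hT : IsDominoTiling (squareRegion n) T} {s0 s : ℤ × ℤ}
    (hs : s ∈ compC hT s0) : Gf n T s ∈ compC hT s0 := by
  obtain ⟨hsD, k, hk | hk⟩ := mem_compC.mp hs
  · refine mem_compC.mpr ⟨?_, -1 + k, Or.inr ?_⟩
    · have : Gf n T s = opp (Ttau T) s := by rw [Gf, if_pos hsD]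
      rw [this]; exact oppt_mem_Delta hT hsD
    · rw [Gf_eq_Pp_Fp hT, hk]
      have h1 : Pp hT (Fp hT (((Pp hT)^k) s0))
          = ((Pp hT)^(1:ℤ)) (Fp hT (((Pp hT)^k) s0)) := by
        rw [zpow_one]
      rw [h1, Pp_hswapFP hT 1, Pp_hplus hT (-1) k s0]
  · refine mem_compC.mpr ⟨?_, 1 + k, Or.inl ?_⟩
    · have : Gf n T s = opp (Ttau T) s := by rw [Gf, if_pos hsD]
      rw [this]; exact oppt_mem_Delta hT hsD
    · rw [Gf_eq_Pp_Fp hT, hk, Pp_hFF hT]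
      have h1 : Pp hT (((Pp hT)^k) s0) = ((Pp hT)^(1:ℤ)) (((Pp hT)^k) s0) := by
        rw [zpow_one]
      rw [h1, Pp_hplus hT 1 k s0]

lemma oddq {m a : ℤ} (h1 : m ∣ 2*a) (h2 : ¬ m ∣ a) : ∃ t, 2*a = m*(2*t+1) := by
  obtain ⟨t, ht⟩ := h1
  rcases Int.even_or_odd t with ⟨u, hu⟩ | ⟨u, hu⟩
  · exfalso
    apply h2
    refine ⟨u, ?_⟩
    have h3 : m*(u+u) = 2*(m*u) := by ring
    have h4 : 2*a = 2*(m*u) := by rw [ht, hu, h3]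
    linarith
  · exact ⟨u, by rw [ht, hu]⟩

lemma dvd_diff_of_two {m a b : ℤ} (ha : m ∣ 2*a) (hb : m ∣ 2*b)
    (hna : ¬ m ∣ a) (hnb : ¬ m ∣ b) : m ∣ (a - b) := by
  obtain ⟨t, ht⟩ := oddq ha hna
  obtain ⟨u, hu⟩ := oddq hb hnb
  refine ⟨t - u, ?_⟩
  have h3 : m*(2*t+1) - m*(2*u+1) = 2*(m*(t-u)) := by ring
  have h4 : 2*(a-b) = 2*(m*(t-u)) := by
    have : 2*a - 2*b = 2*(a-b) := by ring
    linarith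
  linarith

end LB6


section LB7

variable {n : ℕ} {T : Finset (Finset (ℤ × ℤ))}

lemma diag_in_comp (hT : IsDominoTiling (squareRegion n) T) {i0 : ℕ} (hi0 : i0 < 2*n)
    {j : ℕ}
    (hmem : (((j:ℤ), (j:ℤ)) : ℤ × ℤ) ∈ compC hT ((i0:ℤ), (i0:ℤ))) :
    ∃ k : ℤ, (((j:ℤ), (j:ℤ)) : ℤ × ℤ) = ((Pp hT)^k) ((i0:ℤ), (i0:ℤ)) ∧
      ((Pp hT)^(k+k)) (((i0:ℤ), (i0:ℤ)) : ℤ × ℤ) = ((i0:ℤ), (i0:ℤ)) := by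
  have hs0 : (((i0:ℤ), (i0:ℤ)) : ℤ × ℤ) ∈ Delta n T :=
    diag_mem_Delta hT (by positivity) (by exact_mod_cast hi0)
  obtain ⟨hjD, k, hk | hk⟩ := mem_compC.mp hmem
  · refine ⟨k, hk, ?_⟩
    have hswap := DFunLike.congr_fun (conj_Pp_zpow hT k) (((i0:ℤ), (i0:ℤ)) : ℤ × ℤ)
    simp only [Equiv.Perm.mul_apply] at hswap
    have hsp : Sp (((i0:ℤ), (i0:ℤ)) : ℤ × ℤ) = ((i0:ℤ), (i0:ℤ)) := rfl
    rw [hsp] at hswap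
    have h2 : Sp (((Pp hT)^k) ((i0:ℤ), (i0:ℤ))) = ((Pp hT)^k) ((i0:ℤ), (i0:ℤ)) := by
      rw [← hk]; rfl
    have h3 : ((Pp hT)^k) (((i0:ℤ), (i0:ℤ)) : ℤ × ℤ)
        = ((Pp hT)^(-k)) ((i0:ℤ), (i0:ℤ)) := h2.symm.trans hswap
    have h4 := congrArg ((Pp hT)^k) h3
    rw [Pp_hplus hT k k, Pp_hplus hT k (-k), add_neg_cancel, zpow_zero,
      Equiv.Perm.one_apply] at h4
    exact h4
  · exfalso
    have hyD : ((Pp hT)^k) (((i0:ℤ), (i0:ℤ)) : ℤ × ℤ) ∈ Delta n T :=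
      Pp_zpow_mem_Delta hT k _ hs0
    have hcol := Ff_colorflip hT hyD
    have hcol2 := Pp_zpow_color hT k (((i0:ℤ), (i0:ℤ)) : ℤ × ℤ)
    have hk' : (((j:ℤ), (j:ℤ)) : ℤ × ℤ)
        = Ff n T (((Pp hT)^k) ((i0:ℤ), (i0:ℤ))) := hk
    have c1 := congrArg Prod.fst hk'
    have c2 := congrArg Prod.snd hk'
    simp only [] at c1 c2 hcol2
    omega

lemma fiber_le_two (hT : IsDominoTiling (squareRegion n) T) {i0 : ℕ} (hi0 : i0 < 2*n) :
    ((Finset.range (2*n)).filter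
      (fun (j : ℕ) => compC hT ((j:ℤ), (j:ℤ)) = compC hT ((i0:ℤ), (i0:ℤ)))).card ≤ 2 := by
  by_contra hcon
  push_neg at hcon
  obtain ⟨a, b, c, ha, hb, hc, hab, hac, hbc⟩ := Finset.two_lt_card_iff.mp hcon
  have hs0 : (((i0:ℤ), (i0:ℤ)) : ℤ × ℤ) ∈ Delta n T :=
    diag_mem_Delta hT (by positivity) (by exact_mod_cast hi0)
  have key : ∀ j ∈ (Finset.range (2*n)).filter
      (fun (j : ℕ) => compC hT ((j:ℤ), (j:ℤ)) = compC hT ((i0:ℤ), (i0:ℤ))),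
      (((j:ℤ), (j:ℤ)) : ℤ × ℤ) ∈ compC hT ((i0:ℤ), (i0:ℤ)) := by
    intro j hj
    obtain ⟨hjr, hjeq⟩ := Finset.mem_filter.mp hj
    rw [Finset.mem_range] at hjr
    have : (((j:ℤ), (j:ℤ)) : ℤ × ℤ) ∈ compC hT ((j:ℤ), (j:ℤ)) :=
      mem_compC_self (diag_mem_Delta hT (by positivity) (by exact_mod_cast hjr))
    rwa [hjeq] at this
  obtain ⟨k1, hp1, hq1⟩ := diag_in_comp hT hi0 (key a ha)
  obtain ⟨k2, hp2, hq2⟩ := diag_in_comp hT hi0 (key b hb)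
  obtain ⟨k3, hp3, hq3⟩ := diag_in_comp hT hi0 (key c hc)
  have hex := exists_period hT hs0
  obtain ⟨hm, hfix⟩ := Nat.find_spec hex
  set m := Nat.find hex with hmdef
  have hmin : ∀ j : ℕ, 0 < j → j < m → ((Pp hT)^j) (((i0:ℤ), (i0:ℤ)) : ℤ × ℤ) ≠ ((i0:ℤ), (i0:ℤ)) :=
    fun j hj1 hj2 hfj => Nat.find_min hex hj2 ⟨hj1, hfj⟩
  have hdvd := period_dvd hT hm hfix hmin
  have hfixz : ∀ q : ℤ, ((Pp hT)^((m:ℤ) * q)) (((i0:ℤ), (i0:ℤ)) : ℤ × ℤ) = ((i0:ℤ), (i0:ℤ)) := by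
    intro q
    rw [zpow_mul]
    refine fix_zpow _ _ ?_ q
    rw [zpow_natCast]
    exact hfix
  have hneq : ∀ (x y : ℕ) (kx ky : ℤ), x ≠ y →
      (((x:ℤ), (x:ℤ)) : ℤ × ℤ) = ((Pp hT)^kx) ((i0:ℤ), (i0:ℤ)) →
      (((y:ℤ), (y:ℤ)) : ℤ × ℤ) = ((Pp hT)^ky) ((i0:ℤ), (i0:ℤ)) →
      ¬ (m:ℤ) ∣ (kx - ky) := by
    intro x y kx ky hxy hx hy hdvd'
    obtain ⟨q, hq⟩ := hdvd'
    have hfixd : ((Pp hT)^(kx - ky)) (((i0:ℤ), (i0:ℤ)) : ℤ × ℤ) = ((i0:ℤ), (i0:ℤ)) := by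
      rw [hq]; exact hfixz q
    have e : ((Pp hT)^kx) (((i0:ℤ), (i0:ℤ)) : ℤ × ℤ)
        = ((Pp hT)^ky) (((i0:ℤ), (i0:ℤ)) : ℤ × ℤ) := by
      have e1 := Pp_hplus hT ky (kx - ky) (((i0:ℤ), (i0:ℤ)) : ℤ × ℤ)
      rw [hfixd, show ky + (kx - ky) = kx by ring] at e1
      exact e1.symm
    rw [← hx, ← hy] at e
    have := congrArg Prod.fst e
    simp only [] at this
    apply hxy
    exact_mod_cast this
  have d1 : (m:ℤ) ∣ 2*k1 := by rw [two_mul]; exact hdvd _ hq1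
  have d2 : (m:ℤ) ∣ 2*k2 := by rw [two_mul]; exact hdvd _ hq2
  have d3 : (m:ℤ) ∣ 2*k3 := by rw [two_mul]; exact hdvd _ hq3
  have n12 : ¬ (m:ℤ) ∣ (k1 - k2) := hneq a b k1 k2 hab hp1 hp2
  have n13 : ¬ (m:ℤ) ∣ (k1 - k3) := hneq a c k1 k3 hac hp1 hp3
  have n23 : ¬ (m:ℤ) ∣ (k2 - k3) := hneq b c k2 k3 hbc hp2 hp3
  have da : (m:ℤ) ∣ 2*(k1 - k2) := by
    have := dvd_sub d1 d2
    have h4 : 2*k1 - 2*k2 = 2*(k1-k2) := by ring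
    rwa [h4] at this
  have db : (m:ℤ) ∣ 2*(k1 - k3) := by
    have := dvd_sub d1 d3
    have h4 : 2*k1 - 2*k3 = 2*(k1-k3) := by ring
    rwa [h4] at this
  have hfin := dvd_diff_of_two da db n12 n13
  have h5 : (k1 - k2) - (k1 - k3) = k3 - k2 := by ring
  rw [h5] at hfin
  exact n23 ((dvd_neg).mp (by rwa [show -(k2 - k3) = k3 - k2 by ring]))

end LB7


section LB8

variable {n : ℕ} {T : Finset (Finset (ℤ × ℤ))}

noncomputable def flipT (T : Finset (Finset (ℤ × ℤ))) (C : Finset (ℤ × ℤ)) :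
    Finset (Finset (ℤ × ℤ)) :=
  T.filter (fun d => ∀ s ∈ d, s ∉ C) ∪ (Ttau T).filter (fun d => ∃ s ∈ d, s ∈ C)

lemma flipT_tiling (hT : IsDominoTiling (squareRegion n) T) {C : Finset (ℤ × ℤ)}
    (hCD : C ⊆ Delta n T) (hCf : ∀ s ∈ C, opp T s ∈ C)
    (hCg : ∀ s ∈ C, opp (Ttau T) s ∈ C) :
    IsDominoTiling (squareRegion n) (flipT T C) := by
  have hTt := Ttau_tiling hT
  constructor
  · intro d hd
    rcases Finset.mem_union.mp hd with h | h
    · exact hT.1 d (Finset.mem_of_mem_filter d h)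
    · exact hTt.1 d (Finset.mem_of_mem_filter d h)
  · intro s hs
    by_cases hsC : s ∈ C
    · refine ⟨dom (Ttau T) s, ⟨Finset.mem_union_right _ ?_, (dom_spec hTt hs).2⟩, ?_⟩
      · exact Finset.mem_filter.mpr ⟨(dom_spec hTt hs).1, ⟨s, (dom_spec hTt hs).2, hsC⟩⟩
      · rintro d ⟨hd, hsd⟩
        rcases Finset.mem_union.mp hd with h | h
        · obtain ⟨-, hall⟩ := Finset.mem_filter.mp h
          exact absurd hsC (hall s hsd)
        · exact dom_eq hTt hs (Finset.mem_of_mem_filter d h) hsd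
    · refine ⟨dom T s, ⟨Finset.mem_union_left _ ?_, (dom_spec hT hs).2⟩, ?_⟩
      · refine Finset.mem_filter.mpr ⟨(dom_spec hT hs).1, ?_⟩
        intro t ht htC
        rcases dom_of_mem hT hs ht with rfl | h
        · exact hsC htC
        · apply hsC
          have h2 := hCf _ htC
          rw [h] at h2
          rwa [opp_opp hT hs] at h2
      · rintro d ⟨hd, hsd⟩
        rcases Finset.mem_union.mp hd with h | h
        · exact dom_eq hT hs (Finset.mem_of_mem_filter d h) hsd
        · exfalso
          obtain ⟨hdT, t, htd, htC⟩ := Finset.mem_filter.mp h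
          have hde : d = dom (Ttau T) s := dom_eq hTt hs hdT hsd
          rw [hde] at htd
          rcases dom_of_mem hTt hs htd with rfl | h2
          · exact hsC htC
          · apply hsC
            have h3 := hCg _ htC
            rw [h2] at h3
            rwa [opp_opp hTt hs] at h3

lemma flipT_ne (hT : IsDominoTiling (squareRegion n) T) {C : Finset (ℤ × ℤ)}
    (hCD : C ⊆ Delta n T) {s0 : ℤ × ℤ} (hs0 : s0 ∈ C) : flipT T C ≠ T := by
  have hTt := Ttau_tiling hT
  have hs0D := hCD hs0
  have hs0R : s0 ∈ squareRegion n := Delta_subset hs0D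
  intro h
  have h1 : dom (Ttau T) s0 ∈ flipT T C := by
    refine Finset.mem_union_right _ ?_
    exact Finset.mem_filter.mpr ⟨(dom_spec hTt hs0R).1, ⟨s0, (dom_spec hTt hs0R).2, hs0⟩⟩
  rw [h] at h1
  have h2 : dom (Ttau T) s0 = dom T s0 := dom_eq hT hs0R h1 (dom_spec hTt hs0R).2
  have h3 : dom T s0 ∈ Ttau T := by
    rw [← h2]
    exact (dom_spec hTt hs0R).1
  exact (mem_Delta.mp hs0D).2 h3

theorem lower_bound (hn : 0 < n) {T S : Finset (Finset (ℤ × ℤ))}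
    (hT : IsDominoTiling (squareRegion n) T)
    (hFS : IsForcingSet (squareRegion n) T S) : n ≤ S.card := by
  classical
  have himg : n ≤ ((Finset.range (2*n)).image
      (fun (j : ℕ) => compC hT ((j:ℤ), (j:ℤ)))).card := by
    have h := Finset.card_le_mul_card_image (f := fun (j : ℕ) => compC hT ((j:ℤ), (j:ℤ)))
      (Finset.range (2*n)) 2 ?_
    · rw [Finset.card_range] at h
      omega
    · intro Cv hCv
      obtain ⟨i0, hi0, rfl⟩ := Finset.mem_image.mp hCv
      rw [Finset.mem_range] at hi0
      exact fiber_le_two hT hi0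
  have hCprops : ∀ C ∈ (Finset.range (2*n)).image
      (fun (j : ℕ) => compC hT ((j:ℤ), (j:ℤ))),
      C ⊆ Delta n T ∧ (∀ s ∈ C, opp T s ∈ C) ∧ (∀ s ∈ C, opp (Ttau T) s ∈ C) ∧
        C.Nonempty := by
    intro C hC
    obtain ⟨i0, hi0, rfl⟩ := Finset.mem_image.mp hC
    rw [Finset.mem_range] at hi0
    have hs0 : (((i0:ℤ), (i0:ℤ)) : ℤ × ℤ) ∈ Delta n T :=
      diag_mem_Delta hT (by positivity) (by exact_mod_cast hi0)
    refine ⟨compC_subset, ?_, ?_, ⟨_, mem_compC_self hs0⟩⟩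
    · intro s hs
      have h1 := compC_closed_F hs
      rwa [Ff, if_pos (compC_subset hs)] at h1
    · intro s hs
      have h1 := compC_closed_G hs
      rwa [Gf, if_pos (compC_subset hs)] at h1
  have hsel : ∀ C ∈ (Finset.range (2*n)).image
      (fun (j : ℕ) => compC hT ((j:ℤ), (j:ℤ))), ∃ d ∈ S, ∃ t ∈ d, t ∈ C := by
    intro C hC
    obtain ⟨hCD, hCf, hCg, ⟨s0, hs0C⟩⟩ := hCprops C hC
    by_contra hnone
    push_neg at hnone
    have hsub : S ⊆ flipT T C := by
      intro d hd
      refine Finset.mem_union_left _ (Finset.mem_filter.mpr ⟨hFS.1 hd, ?_⟩)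
      exact hnone d hd
    have heq := hFS.2 (flipT T C) (flipT_tiling hT hCD hCf hCg) hsub
    exact flipT_ne hT hCD hs0C heq
  set φ : Finset (ℤ × ℤ) → Finset (ℤ × ℤ) :=
    fun C => if h : ∃ d ∈ S, ∃ t ∈ d, t ∈ C then h.choose else ∅ with hφ
  have hφspec : ∀ C ∈ (Finset.range (2*n)).image
      (fun (j : ℕ) => compC hT ((j:ℤ), (j:ℤ))),
      φ C ∈ S ∧ ∃ t ∈ φ C, t ∈ C := by
    intro C hC
    have h := hsel C hC
    rw [hφ]
    simp only [dif_pos h]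
    exact h.choose_spec
  have hinj : Set.InjOn φ ((Finset.range (2*n)).image
      (fun (j : ℕ) => compC hT ((j:ℤ), (j:ℤ))) : Finset (Finset (ℤ × ℤ))) := by
    intro C1 hC1 C2 hC2 heq
    rw [Finset.mem_coe] at hC1 hC2
    obtain ⟨hd1, t1, ht1d, ht1C⟩ := hφspec C1 hC1
    obtain ⟨hd2, t2, ht2d, ht2C⟩ := hφspec C2 hC2
    obtain ⟨hCD1, hCf1, -, -⟩ := hCprops C1 hC1
    obtain ⟨hCD2, -, -, -⟩ := hCprops C2 hC2
    rw [heq] at ht1d hd1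
    -- now t1, t2 ∈ φ C2 =: d ∈ S ⊆ T
    have hdT : φ C2 ∈ T := hFS.1 hd2
    have ht1R : t1 ∈ squareRegion n := Delta_subset (hCD1 ht1C)
    have hde : φ C2 = dom T t1 := dom_eq hT ht1R hdT ht1d
    rw [hde] at ht2d
    have ht2C1 : t2 ∈ C1 := by
      rcases dom_of_mem hT ht1R ht2d with rfl | h2
      · exact ht1C
      · rw [h2]
        exact hCf1 _ ht1C
    -- C1 and C2 are components containing t2
    obtain ⟨i1, hi1, hC1e⟩ := Finset.mem_image.mp hC1
    obtain ⟨i2, hi2, hC2e⟩ := Finset.mem_image.mp hC2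
    rw [← hC1e] at ht2C1 ⊢
    rw [← hC2e] at ht2C ⊢
    rw [compC_eq_of_mem ht2C1, compC_eq_of_mem ht2C]
  have hcard := Finset.card_le_card_of_injOn φ
    (fun C hC => (hφspec C hC).1) hinj
  omega

end LB8

end PKaux

/-- Pachter–Kim. The forcing number of the `2n × 2n` square is `n`. -/
theorem forcingNumber_squareRegion (n : ℕ) (hn : 0 < n) :
    forcingNumber (squareRegion n) = n := by
  have hmem : n ∈ {m | ∃ T S, IsDominoTiling (squareRegion n) T ∧
      IsForcingSet (squareRegion n) T S ∧ S.card = m} :=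
    ⟨PKaux.prT n, PKaux.stair n, PKaux.prT_tiling hn,
      ⟨PKaux.stair_mem_prT hn, fun T' hT' hS => PKaux.prT_forced hn hT' hS⟩,
      PKaux.stair_card n⟩
  rw [forcingNumber]
  apply le_antisymm
  · exact Nat.sInf_le hmem
  · apply le_csInf ⟨n, hmem⟩
    rintro m ⟨T, S, hT, hFS, rfl⟩
    exact PKaux.lower_bound hn hT hFS
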